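/- Let (X_1, X_2, X_3) be a partition of {1,…,N} and suppose ξ = (w_1,…,w_N) minimizes the convex, linearly differentiable criterion Φ over the subset of Ξ consisting of designs with w_i = 0 for all i ∈ X_1 and w_i = 1/n for all i ∈ X_3, and suppose the minimizer satisfies 0 < w_i < 1/n for every i ∈ X_2. If X_2 is nonempty, then F_Φ(ξ; i) takes the same value for all i ∈ X_2. -/
import Mathlib


theorem stmt_5
    (N : ℕ) (hN : 1 ≤ N)
    (Δ : Set (Fin N → ℝ))
    (hΔ : Δ = {w : Fin N → ℝ | (∀ i, 0 ≤ w i) ∧ ∑ i, w i = 1})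
    (Φ : (Fin N → ℝ) → ℝ)
    (hconv : ConvexOn ℝ Δ Φ)
    (F : (Fin N → ℝ) → (Fin N → ℝ) → ℝ)
    (hF : ∀ ξ ∈ Δ, ∀ η ∈ Δ,
      Filter.Tendsto (fun α : ℝ => (Φ ((1 - α) • ξ + α • η) - Φ ξ) / α)
        (nhdsWithin 0 (Set.Ioi 0)) (nhds (F ξ η)))
    (hlin : ∀ ξ ∈ Δ, ∀ η ∈ Δ, F ξ η = ∑ i, η i * F ξ (Pi.single i 1))
    (n : ℕ) (hn1 : 1 ≤ n) (hnN : n ≤ N)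
    (Ξ : Set (Fin N → ℝ))
    (hΞ : Ξ = {w : Fin N → ℝ | w ∈ Δ ∧ ∀ i, w i ≤ 1 / (n : ℝ)})
    (X1 X2 X3 : Set (Fin N))
    (hcover : X1 ∪ X2 ∪ X3 = Set.univ)
    (hd12 : Disjoint X1 X2) (hd13 : Disjoint X1 X3) (hd23 : Disjoint X2 X3)
    (ξ : Fin N → ℝ)
    (hmem : ξ ∈ Ξ)
    (hz1 : ∀ i ∈ X1, ξ i = 0)
    (hz3 : ∀ i ∈ X3, ξ i = 1 / (n : ℝ))
    (hopt : ∀ η ∈ Ξ, (∀ i ∈ X1, η i = 0) → (∀ i ∈ X3, η i = 1 / (n : ℝ)) →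
      Φ ξ ≤ Φ η)
    (hint : ∀ i ∈ X2, 0 < ξ i ∧ ξ i < 1 / (n : ℝ))
    (hne : X2.Nonempty) :
    ∀ i ∈ X2, ∀ j ∈ X2, F ξ (Pi.single i 1) = F ξ (Pi.single j 1) := by

  have hξΔ : ξ ∈ Δ := by
    rw [hΞ] at hmem; exact hmem.1
  have hξprop : (∀ i, 0 ≤ ξ i) ∧ ∑ i, ξ i = 1 := by rw [hΔ] at hξΔ; exact hξΔ
  have hξle : ∀ i, ξ i ≤ 1 / (n : ℝ) := by rw [hΞ] at hmem; exact hmem.2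
  have hsingle : ∀ (j : Fin N) (g : Fin N → ℝ),
      ∑ k, (Pi.single j 1 : Fin N → ℝ) k * g k = g j := by
    intro j g
    rw [Finset.sum_eq_single j]
    · simp
    · intro b _ hb; simp [Pi.single_apply, hb]
    · intro h; exact absurd (Finset.mem_univ j) h
  have hFzero : F ξ ξ = 0 := by
    have h1 := hF ξ hξΔ ξ hξΔ
    have h2 : (fun α : ℝ => (Φ ((1 - α) • ξ + α • ξ) - Φ ξ) / α)
        = fun _ : ℝ => (0:ℝ) := by
      funext α
      have : (1 - α) • ξ + α • ξ = ξ := by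
        funext k; simp [Pi.smul_apply, smul_eq_mul]; ring
      rw [this]; simp
    rw [h2] at h1
    exact tendsto_nhds_unique h1 tendsto_const_nhds
  -- key step
  have key : ∀ i ∈ X2, ∀ j ∈ X2, i ≠ j →
      F ξ (Pi.single i 1) ≤ F ξ (Pi.single j 1) := by
    intro i hi j hj hij
    obtain ⟨hi0, hi1⟩ := hint i hi
    obtain ⟨hj0, hj1⟩ := hint j hj
    set t : ℝ := min (ξ i) (1 / (n : ℝ) - ξ j) with ht_def
    have ht : 0 < t := lt_min hi0 (by linarith)
    have hti : t ≤ ξ i := min_le_left _ _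
    have htj : t ≤ 1 / (n : ℝ) - ξ j := min_le_right _ _
    set d : Fin N → ℝ := fun k =>
      (Pi.single j 1 : Fin N → ℝ) k - (Pi.single i 1 : Fin N → ℝ) k with hd_def
    have hd : ∀ k, d k = (if k = j then (1:ℝ) else 0) - (if k = i then 1 else 0) := by
      intro k; simp [hd_def, Pi.single_apply]
    have hsumd : ∑ k, d k = 0 := by
      simp [hd_def, Finset.sum_sub_distrib, Finset.sum_pi_single']
    have hfeas : ∀ s : ℝ, 0 ≤ s → s ≤ t →
        (fun k => ξ k + s * d k) ∈ Ξ ∧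
        (∀ k ∈ X1, ξ k + s * d k = 0) ∧
        (∀ k ∈ X3, ξ k + s * d k = 1 / (n : ℝ)) := by
      intro s hs0 hst
      have hdi : d i = -1 := by rw [hd]; simp [hij]
      have hdj : d j = 1 := by rw [hd]; simp [hij.symm]
      have hdo : ∀ k, k ≠ i → k ≠ j → d k = 0 := by
        intro k hki hkj; rw [hd]; simp [hki, hkj]
      have hnn : ∀ k, 0 ≤ ξ k + s * d k := by
        intro k
        rcases eq_or_ne k i with rfl | hki
        · rw [hdi]; linarith
        · rcases eq_or_ne k j with rfl | hkj
          · rw [hdj]; linarith [hξprop.1 k]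
          · rw [hdo k hki hkj, mul_zero, add_zero]; exact hξprop.1 k
      have hub : ∀ k, ξ k + s * d k ≤ 1 / (n : ℝ) := by
        intro k
        rcases eq_or_ne k j with rfl | hkj
        · rw [hdj]; linarith
        · rcases eq_or_ne k i with rfl | hki
          · rw [hdi]; nlinarith [hξle k]
          · rw [hdo k hki hkj, mul_zero, add_zero]; exact hξle k
      have hsum : ∑ k, (ξ k + s * d k) = 1 := by
        rw [Finset.sum_add_distrib, ← Finset.mul_sum, hsumd, hξprop.2]; ring
      refine ⟨?_, ?_, ?_⟩
      · rw [hΞ]; exact ⟨by rw [hΔ]; exact ⟨hnn, hsum⟩, hub⟩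
      · intro k hk
        have hki : k ≠ i := fun h => Set.disjoint_left.mp hd12 hk (h ▸ hi)
        have hkj : k ≠ j := fun h => Set.disjoint_left.mp hd12 hk (h ▸ hj)
        rw [hdo k hki hkj, mul_zero, add_zero]; exact hz1 k hk
      · intro k hk
        have hki : k ≠ i := fun h => Set.disjoint_right.mp hd23 hk (h ▸ hi)
        have hkj : k ≠ j := fun h => Set.disjoint_right.mp hd23 hk (h ▸ hj)
        rw [hdo k hki hkj, mul_zero, add_zero]; exact hz3 k hk
    set η' : Fin N → ℝ := fun k => ξ k + t * d k with hη'_def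
    have hη'Ξ := hfeas t ht.le le_rfl
    have hη'Δ : η' ∈ Δ := by
      have := hη'Ξ.1; rw [hΞ] at this; exact this.1
    have hge : 0 ≤ F ξ η' := by
      refine ge_of_tendsto (hF ξ hξΔ η' hη'Δ) ?_
      filter_upwards [Ioc_mem_nhdsGT_of_mem (Set.left_mem_Ico.mpr one_pos)]
        with α hα
      have hα0 : 0 < α := hα.1
      have heq : (1 - α) • ξ + α • η' = fun k => ξ k + (α * t) * d k := by
        funext k; simp [hη'_def, Pi.smul_apply, smul_eq_mul]; ring
      have hfeas' := hfeas (α * t) (by positivity)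
        (by nlinarith [hα.2])
      have hle : Φ ξ ≤ Φ ((1 - α) • ξ + α • η') := by
        rw [heq]
        exact hopt _ hfeas'.1 hfeas'.2.1 hfeas'.2.2
      exact div_nonneg (by linarith) hα0.le
    have hcomp : F ξ η' = t * (F ξ (Pi.single j 1) - F ξ (Pi.single i 1)) := by
      rw [hlin ξ hξΔ η' hη'Δ]
      have h0 : ∑ k, ξ k * F ξ (Pi.single k 1) = 0 := by
        rw [← hlin ξ hξΔ ξ hξΔ, hFzero]
      have : ∑ k, η' k * F ξ (Pi.single k 1)
          = ∑ k, ξ k * F ξ (Pi.single k 1)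
            + t * (∑ k, (Pi.single j 1 : Fin N → ℝ) k * F ξ (Pi.single k 1)
                 - ∑ k, (Pi.single i 1 : Fin N → ℝ) k * F ξ (Pi.single k 1)) := by
        rw [mul_sub, Finset.mul_sum, Finset.mul_sum,
          ← Finset.sum_sub_distrib, ← Finset.sum_add_distrib]
        refine Finset.sum_congr rfl fun k _ => ?_
        simp [hη'_def, hd_def]; ring
      rw [this, h0, hsingle, hsingle]; ring
    rw [hcomp] at hge
    nlinarith
  intro i hi j hj
  rcases eq_or_ne i j with rfl | hij
  · rfl
  · exact le_antisymm (key i hi j hj hij) (key j hj i hi hij.symm)
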